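/- (Gram inversion for shift-symmetric rotations.) Let ν be a conjugation-invariant Borel probability measure on SO(3), let M ∈ SO(3), let k ≥ 1, let V be a real 3×k matrix, let H = diag(1,1,0), and set τ₂ := ∫_{SO(3)} ((e⁽³⁾)ᵀ A e⁽³⁾)² dν(A). Then, with D := diag(√((1−τ₂)/2), √((1−τ₂)/2), √τ₂), the entrywise integral ∫_{SO(3)} (H A M V)ᵀ (H A M V) dν(A) equals Vᵀ Mᵀ (I − D²) M V = Vᵀ V − (D M V)ᵀ (D M V). (Here A ↦ A M is the law of a shift-symmetric random rotation P = R M with R distributed as ν, Gram(W) := WᵀW, and the identity expresses the expected Gram matrix of the planar projection H P V in terms of the Gram matrices of V and of D M V.) -/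
import Mathlib


open MeasureTheory Matrix
open scoped ENNReal

/-- Borel measurable structure on `3 × 3` real matrices (the product σ-algebra). -/
instance : MeasurableSpace (Matrix (Fin 3) (Fin 3) ℝ) :=
  inferInstanceAs (MeasurableSpace (Fin 3 → Fin 3 → ℝ))

/-- `SO(3)`: real orthogonal `3 × 3` matrices with determinant `1`. -/
def IsSO3 (A : Matrix (Fin 3) (Fin 3) ℝ) : Prop := A * Aᵀ = 1 ∧ A.det = 1

/-- `e⁽³⁾ = (0,0,1)ᵀ`. -/
def e3 : Fin 3 → ℝ := ![0, 0, 1]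

/-- A Borel probability measure on `SO(3)` is conjugation-invariant if it is invariant
under `A ↦ Qᵀ A Q` for every `Q ∈ SO(3)`. -/
def ConjInvariant (ν : Measure (Matrix (Fin 3) (Fin 3) ℝ)) : Prop :=
  ∀ Q, IsSO3 Q → Measure.map (fun A => Qᵀ * A * Q) ν = ν

section Aux

lemma gi_meas_entry (i j : Fin 3) : Measurable fun A : Matrix (Fin 3) (Fin 3) ℝ => A i j :=
  (measurable_pi_apply j).comp (measurable_pi_apply i)

lemma gi_row_bound {A : Matrix (Fin 3) (Fin 3) ℝ} (hA : IsSO3 A) :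
    A 2 0 * A 2 0 + A 2 1 * A 2 1 + A 2 2 * A 2 2 = 1 := by
  have h : (A * Aᵀ) 2 2 = (1 : Matrix (Fin 3) (Fin 3) ℝ) 2 2 := by rw [hA.1]
  simpa [Matrix.mul_apply, Fin.sum_univ_three, Matrix.transpose_apply, Matrix.one_apply] using h

lemma gi_abs_le {A : Matrix (Fin 3) (Fin 3) ℝ} (hA : IsSO3 A) (i : Fin 3) :
    |A 2 i| ≤ 1 := by
  have h := gi_row_bound hA
  have hcase : A 2 i = A 2 0 ∨ A 2 i = A 2 1 ∨ A 2 i = A 2 2 := by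
    fin_cases i
    · exact Or.inl rfl
    · exact Or.inr (Or.inl rfl)
    · exact Or.inr (Or.inr rfl)
  rw [abs_le]
  rcases hcase with hc | hc | hc <;> rw [hc] <;> constructor <;>
    nlinarith [mul_self_nonneg (A 2 0), mul_self_nonneg (A 2 1), mul_self_nonneg (A 2 2)]

lemma gi_expand {k : ℕ} (X : Matrix (Fin 3) (Fin k) ℝ) (C : Matrix (Fin 3) (Fin 3) ℝ)
    (p q : Fin k) :
    (Xᵀ * C * X) p q = ∑ i : Fin 3, ∑ j : Fin 3, (X i p * X j q) * C i j := by
  rw [Matrix.mul_apply]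
  simp_rw [Matrix.mul_apply, Matrix.transpose_apply, Finset.sum_mul]
  rw [Finset.sum_comm]
  exact Finset.sum_congr rfl fun i _ => Finset.sum_congr rfl fun j _ => by ring

end Aux

/-- Gram inversion for shift-symmetric rotations: for a conjugation-invariant Borel
probability measure `ν` on `SO(3)`, `M ∈ SO(3)`, a real `3 × k` matrix `V` (`k ≥ 1`),
`H = diag(1,1,0)`, `τ₂ = ∫ ((e⁽³⁾)ᵀ A e⁽³⁾)² dν(A)` and
`D = diag(√((1-τ₂)/2), √((1-τ₂)/2), √τ₂)`, the expected Gram matrix of the projection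
satisfies `∫ Gram(H A M V) dν(A) = Vᵀ Mᵀ (I - D²) M V = Gram(V) - Gram(D M V)`. -/
theorem gram_inversion
    (ν : Measure (Matrix (Fin 3) (Fin 3) ℝ)) [IsProbabilityMeasure ν]
    (hsupp : ν {A | ¬ IsSO3 A} = 0)
    (hconj : ConjInvariant ν)
    (M : Matrix (Fin 3) (Fin 3) ℝ) (hM : IsSO3 M)
    (k : ℕ) (hk : 1 ≤ k) (V : Matrix (Fin 3) (Fin k) ℝ) :
    let H : Matrix (Fin 3) (Fin 3) ℝ := Matrix.diagonal ![1, 1, 0]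
    let τ₂ : ℝ := ∫ A, (e3 ⬝ᵥ A.mulVec e3) ^ 2 ∂ν
    let D : Matrix (Fin 3) (Fin 3) ℝ :=
      Matrix.diagonal ![Real.sqrt ((1 - τ₂) / 2), Real.sqrt ((1 - τ₂) / 2), Real.sqrt τ₂]
    (Matrix.of fun p q => ∫ A, ((H * A * M * V)ᵀ * (H * A * M * V)) p q ∂ν)
        = Vᵀ * Mᵀ * (1 - D * D) * M * V ∧
      Vᵀ * Mᵀ * (1 - D * D) * M * V = Vᵀ * V - (D * M * V)ᵀ * (D * M * V) := by
  intro H τ₂ D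
  have hHdef : H = Matrix.diagonal ![1, 1, 0] := rfl
  have hae : ∀ᵐ A ∂ν, IsSO3 A := by
    rw [MeasureTheory.ae_iff]; exact hsupp
  have hTmeas : ∀ i j : Fin 3, Measurable fun A : Matrix (Fin 3) (Fin 3) ℝ => A 2 i * A 2 j :=
    fun i j => (gi_meas_entry 2 i).mul (gi_meas_entry 2 j)
  have hTint : ∀ i j : Fin 3, Integrable (fun A => A 2 i * A 2 j) ν := by
    intro i j
    refine Integrable.mono' (integrable_const 1) (hTmeas i j).aestronglyMeasurable ?_
    filter_upwards [hae] with A hA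
    rw [Real.norm_eq_abs, abs_mul]
    exact mul_le_one₀ (gi_abs_le hA i) (abs_nonneg _) (gi_abs_le hA j)
  -- τ₂ identification
  have hτ : τ₂ = ∫ A, A 2 2 * A 2 2 ∂ν := by
    show (∫ A, (e3 ⬝ᵥ A.mulVec e3) ^ 2 ∂ν) = _
    congr 1; funext A
    simp [e3, dotProduct, Matrix.mulVec, Fin.sum_univ_three]
    ring
  -- conjugation invariance with the quarter-turn about the z-axis
  set Q1 : Matrix (Fin 3) (Fin 3) ℝ := !![0,-1,0;1,0,0;0,0,1] with hQ1def
  have hQ1 : IsSO3 Q1 := by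
    constructor
    · ext i j; fin_cases i <;> fin_cases j <;>
        simp [hQ1def, Matrix.mul_apply, Fin.sum_univ_three, Matrix.one_apply,
          Matrix.transpose_apply, Matrix.vecHead, Matrix.vecTail]
    · simp [hQ1def, Matrix.det_fin_three]
  have hφmeas : Measurable fun A : Matrix (Fin 3) (Fin 3) ℝ => Q1ᵀ * A * Q1 := by
    apply measurable_pi_lambda; intro i
    apply measurable_pi_lambda; intro j
    simp only [Matrix.mul_apply]
    exact Finset.measurable_sum _ fun l _ =>
      (Finset.measurable_sum _ fun m _ =>
        ((measurable_pi_apply _).comp (measurable_pi_apply m)).const_mul _).mul_const _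
  have hφ0 : ∀ A : Matrix (Fin 3) (Fin 3) ℝ, (Q1ᵀ * A * Q1) 2 0 = A 2 1 := fun A => by
    simp [hQ1def, Matrix.mul_apply, Fin.sum_univ_three, Matrix.transpose_apply,
      Matrix.vecHead, Matrix.vecTail]
  have hφ1 : ∀ A : Matrix (Fin 3) (Fin 3) ℝ, (Q1ᵀ * A * Q1) 2 1 = -(A 2 0) := fun A => by
    simp [hQ1def, Matrix.mul_apply, Fin.sum_univ_three, Matrix.transpose_apply,
      Matrix.vecHead, Matrix.vecTail]
  have hφ2 : ∀ A : Matrix (Fin 3) (Fin 3) ℝ, (Q1ᵀ * A * Q1) 2 2 = A 2 2 := fun A => by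
    simp [hQ1def, Matrix.mul_apply, Fin.sum_univ_three, Matrix.transpose_apply,
      Matrix.vecHead, Matrix.vecTail]
  have hinv : ∀ i j : Fin 3,
      (∫ A, A 2 i * A 2 j ∂ν) = ∫ A, (Q1ᵀ * A * Q1) 2 i * (Q1ᵀ * A * Q1) 2 j ∂ν := by
    intro i j
    conv_lhs => rw [← hconj Q1 hQ1]
    rw [integral_map hφmeas.aemeasurable ((hTmeas i j).aestronglyMeasurable)]
  -- values of the second-moment integrals
  have hT01 : (∫ A, A 2 0 * A 2 1 ∂ν) = 0 := by
    have h := hinv 0 1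
    simp only [hφ0, hφ1] at h
    rw [show (fun A : Matrix (Fin 3) (Fin 3) ℝ => A 2 1 * -(A 2 0))
        = fun A => -(A 2 0 * A 2 1) from funext fun A => by ring, integral_neg] at h
    linarith
  have hT02 : (∫ A, A 2 0 * A 2 2 ∂ν) = 0 := by
    have h1 := hinv 0 2
    simp only [hφ0, hφ2] at h1
    have h2 := hinv 1 2
    simp only [hφ1, hφ2] at h2
    rw [show (fun A : Matrix (Fin 3) (Fin 3) ℝ => -(A 2 0) * A 2 2)
        = fun A => -(A 2 0 * A 2 2) from funext fun A => by ring, integral_neg] at h2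
    linarith
  have hT12 : (∫ A, A 2 1 * A 2 2 ∂ν) = 0 := by
    have h2 := hinv 1 2
    simp only [hφ1, hφ2] at h2
    rw [show (fun A : Matrix (Fin 3) (Fin 3) ℝ => -(A 2 0) * A 2 2)
        = fun A => -(A 2 0 * A 2 2) from funext fun A => by ring, integral_neg] at h2
    rw [h2, hT02, neg_zero]
  have hT00eq : (∫ A, A 2 0 * A 2 0 ∂ν) = ∫ A, A 2 1 * A 2 1 ∂ν := by
    have h := hinv 0 0
    simp only [hφ0] at h
    exact h
  have htrace : (∫ A, A 2 0 * A 2 0 ∂ν) + (∫ A, A 2 1 * A 2 1 ∂ν) + (∫ A, A 2 2 * A 2 2 ∂ν)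
      = 1 := by
    have h01 : Integrable (fun A : Matrix (Fin 3) (Fin 3) ℝ =>
        A 2 0 * A 2 0 + A 2 1 * A 2 1) ν := (hTint 0 0).add (hTint 1 1)
    have hsum : (∫ A, (A 2 0 * A 2 0 + A 2 1 * A 2 1 + A 2 2 * A 2 2) ∂ν) = 1 := by
      rw [integral_congr_ae (hae.mono fun A hA => gi_row_bound hA)]
      simp
    rw [integral_add h01 (hTint 2 2), integral_add (hTint 0 0) (hTint 1 1)] at hsum
    exact hsum
  have hT00 : (∫ A, A 2 0 * A 2 0 ∂ν) = (1 - τ₂) / 2 := by rw [hτ] at *; linarith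
  have hT11 : (∫ A, A 2 1 * A 2 1 ∂ν) = (1 - τ₂) / 2 := by rw [hτ] at *; linarith
  -- bounds on τ₂
  have hτ₂_nonneg : 0 ≤ τ₂ := by
    rw [hτ]; exact integral_nonneg fun A => mul_self_nonneg _
  have hτ₂_le : τ₂ ≤ 1 := by
    rw [hτ]
    calc (∫ A, A 2 2 * A 2 2 ∂ν) ≤ ∫ _, (1:ℝ) ∂ν := by
          refine integral_mono_ae (hTint 2 2) (integrable_const 1) ?_
          filter_upwards [hae] with A hA
          nlinarith [gi_abs_le hA 2, abs_nonneg (A 2 2), abs_mul_abs_self (A 2 2)]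
      _ = 1 := by simp
  have hhalf : (0:ℝ) ≤ (1 - τ₂) / 2 := by linarith
  -- the matrix D * D
  have hDD : D * D = Matrix.diagonal ![(1 - τ₂)/2, (1 - τ₂)/2, τ₂] := by
    show Matrix.diagonal _ * Matrix.diagonal _ = _
    rw [Matrix.diagonal_mul_diagonal]
    ext i j
    rw [Matrix.diagonal_apply, Matrix.diagonal_apply]
    by_cases hij : i = j
    · rw [if_pos hij, if_pos hij]
      subst hij
      fin_cases i
      · show Real.sqrt ((1 - τ₂)/2) * Real.sqrt ((1 - τ₂)/2) = (1 - τ₂)/2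
        exact Real.mul_self_sqrt hhalf
      · show Real.sqrt ((1 - τ₂)/2) * Real.sqrt ((1 - τ₂)/2) = (1 - τ₂)/2
        exact Real.mul_self_sqrt hhalf
      · show Real.sqrt τ₂ * Real.sqrt τ₂ = τ₂
        exact Real.mul_self_sqrt hτ₂_nonneg
    · rw [if_neg hij, if_neg hij]
  have hTval : ∀ i j : Fin 3, (∫ A, A 2 i * A 2 j ∂ν) = (D * D) i j := by
    intro i j
    rw [hDD]
    have hsymm : ∀ a b : Fin 3, (∫ A, A 2 a * A 2 b ∂ν) = ∫ A, A 2 b * A 2 a ∂ν := by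
      intro a b; congr 1; funext A; ring
    fin_cases i <;> fin_cases j <;>
      simp only [Matrix.diagonal_apply, Matrix.cons_val_zero, Matrix.cons_val_one,
        Matrix.head_cons, Matrix.cons_val_two, Matrix.tail_cons, Matrix.vecHead,
        Matrix.vecTail, Function.comp_apply, Fin.isValue, if_true, if_pos, reduceIte]
    · exact hT00
    · exact hT01
    · exact hT02
    · rw [hsymm]; exact hT01
    · exact hT11
    · exact hT12
    · rw [hsymm]; exact hT02
    · rw [hsymm]; exact hT12
    · exact hτ.symm
  have hMTM : Mᵀ * M = 1 := mul_eq_one_comm.mp hM.1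
  constructor
  · -- first conjunct
    have hHt : Hᵀ = H := Matrix.diagonal_transpose _
    have hHH : H * H = H := by
      ext i j; fin_cases i <;> fin_cases j <;>
        simp [hHdef, Matrix.mul_apply, Fin.sum_univ_three, Matrix.diagonal,
          Matrix.vecHead, Matrix.vecTail]
    have hpoint : ∀ A : Matrix (Fin 3) (Fin 3) ℝ, IsSO3 A →
        (H * A * M * V)ᵀ * (H * A * M * V)
          = Vᵀ * Mᵀ * (1 - Matrix.of fun i j => A 2 i * A 2 j) * M * V := by
      intro A hA
      have hATA : Aᵀ * A = 1 := mul_eq_one_comm.mp hA.1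
      have hmid : Aᵀ * H * A = 1 - Matrix.of fun i j => A 2 i * A 2 j := by
        ext i j
        have h : (Aᵀ * A) i j = (1 : Matrix (Fin 3) (Fin 3) ℝ) i j := by rw [hATA]
        simp only [Matrix.mul_apply, Fin.sum_univ_three, Matrix.transpose_apply,
          Matrix.one_apply] at h
        simp only [Matrix.mul_apply, Fin.sum_univ_three, Matrix.transpose_apply, hHdef,
          Matrix.diagonal, Matrix.of_apply, Matrix.sub_apply, Matrix.one_apply,
          Matrix.cons_val_zero, Matrix.cons_val_one, Matrix.vecHead, Matrix.vecTail]
        by_cases hij : i = j <;> simp [hij] at h ⊢ <;> linarith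
      calc (H * A * M * V)ᵀ * (H * A * M * V)
          = Vᵀ * Mᵀ * Aᵀ * Hᵀ * H * A * M * V := by
            simp only [Matrix.transpose_mul, Matrix.mul_assoc]
        _ = Vᵀ * Mᵀ * (Aᵀ * H * A) * M * V := by
            rw [hHt]
            simp only [Matrix.mul_assoc, ← Matrix.mul_assoc H H, hHH]
        _ = Vᵀ * Mᵀ * (1 - Matrix.of fun i j => A 2 i * A 2 j) * M * V := by rw [hmid]
    ext p q
    rw [Matrix.of_apply]
    rw [integral_congr_ae (hae.mono fun A hA => by rw [hpoint A hA])]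
    have hform : ∀ C : Matrix (Fin 3) (Fin 3) ℝ,
        (Vᵀ * Mᵀ * C * M * V) p q
          = ∑ i : Fin 3, ∑ j : Fin 3, ((M*V) i p * (M*V) j q) * C i j := by
      intro C
      have h1 : Vᵀ * Mᵀ * C * M * V = (M*V)ᵀ * C * (M*V) := by
        simp only [Matrix.transpose_mul, Matrix.mul_assoc]
      rw [h1, gi_expand]
    simp only [hform]
    have hCint : ∀ i j : Fin 3,
        Integrable (fun A => ((M*V) i p * (M*V) j q) *
          ((1 - Matrix.of fun i j => A 2 i * A 2 j) i j)) ν := by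
      intro i j
      have : Integrable (fun A : Matrix (Fin 3) (Fin 3) ℝ =>
          ((1 : Matrix (Fin 3) (Fin 3) ℝ) - Matrix.of fun i j => A 2 i * A 2 j) i j) ν := by
        simp only [Matrix.sub_apply, Matrix.of_apply]
        exact (integrable_const _).sub (hTint i j)
      exact this.const_mul _
    rw [integral_finset_sum _ fun i _ => integrable_finset_sum _ fun j _ => hCint i j]
    refine Finset.sum_congr rfl fun i _ => ?_
    rw [integral_finset_sum _ fun j _ => hCint i j]
    refine Finset.sum_congr rfl fun j _ => ?_
    rw [integral_const_mul]
    congr 1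
    have hone : (∫ A, ((1 : Matrix (Fin 3) (Fin 3) ℝ)
        - Matrix.of fun i j => A 2 i * A 2 j) i j ∂ν)
        = (1 : Matrix (Fin 3) (Fin 3) ℝ) i j - ∫ A, A 2 i * A 2 j ∂ν := by
      simp only [Matrix.sub_apply, Matrix.of_apply]
      rw [integral_sub (integrable_const _) (hTint i j), integral_const]
      simp
    rw [hone, hTval i j, Matrix.sub_apply]
  · -- second conjunct
    have hDT : Dᵀ = D := Matrix.diagonal_transpose _
    have h1 : Mᵀ * (M * V) = V := by rw [← Matrix.mul_assoc, hMTM, Matrix.one_mul]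
    calc Vᵀ * Mᵀ * (1 - D * D) * M * V
        = Vᵀ * (Mᵀ * ((M * V) - D * (D * (M * V)))) := by
          simp only [Matrix.mul_assoc, Matrix.sub_mul, Matrix.mul_sub, Matrix.one_mul]
      _ = Vᵀ * V - Vᵀ * (Mᵀ * (D * (D * (M * V)))) := by
          rw [Matrix.mul_sub, h1, Matrix.mul_sub]
      _ = Vᵀ * V - (D * M * V)ᵀ * (D * M * V) := by
          simp only [Matrix.transpose_mul, hDT, Matrix.mul_assoc]
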